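/- Let g ≥ 1 and let x_1,…,x_n be real numbers, not necessarily distinct. For x ∈ ℝ set I(x) = {i ∈ {1,…,n} : x_i = x}. Let h = (h_1,…,h_n) be a real solution of the dual Vandermonde system ∑_{i=1}^n x_i^k h_i = 0 (k = 0,…,g−1) such that h_i ≠ 0 for all i = 1,…,n. Then at least one of the following holds: (i) ∑_{i ∈ I(x)} h_i = 0 for every x ∈ ℝ; or (ii) the sequence (h_1,…,h_n) contains at least ⌊(g+1)/2⌋ positive members and at least ⌊(g+1)/2⌋ negative members. -/

import Mathlib

open Polynomial Finset

lemma poly_sum_zero' {g n : ℕ} {x h : Fin n → ℝ}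
    (hsys : ∀ k, k < g → ∑ i, x i ^ k * h i = 0)
    (p : ℝ[X]) (hp : p.natDegree < g) :
    ∑ i, p.eval (x i) * h i = 0 := by
  have he : ∀ i : Fin n, p.eval (x i) = ∑ k ∈ Finset.range g, p.coeff k * x i ^ k :=
    fun i => Polynomial.eval_eq_sum_range' hp _
  calc ∑ i, p.eval (x i) * h i
      = ∑ i, ∑ k ∈ Finset.range g, p.coeff k * (x i ^ k * h i) := by
        simp_rw [he, Finset.sum_mul, mul_assoc]
    _ = ∑ k ∈ Finset.range g, p.coeff k * ∑ i, x i ^ k * h i := by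
        rw [Finset.sum_comm]; simp_rw [Finset.mul_sum]
    _ = 0 := by
        refine Finset.sum_eq_zero fun k hk => ?_
        rw [hsys k (Finset.mem_range.mp hk), mul_zero]

lemma neg_count' {g n : ℕ} (hg : 1 ≤ g) (x h : Fin n → ℝ)
    (hsys : ∀ k, k < g → ∑ i, x i ^ k * h i = 0)
    (t₀ : ℝ) (ht₀ : ∑ i ∈ Finset.univ.filter (fun i => x i = t₀), h i ≠ 0) :
    (g + 1) / 2 ≤ (Finset.univ.filter (fun i => h i < 0)).card := by
  classical
  set H : ℝ → ℝ := fun t => ∑ i ∈ Finset.univ.filter (fun i => x i = t), h i with hH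
  set S : Finset ℝ := (Finset.univ.image x).filter (fun t => H t ≠ 0) with hSdef
  -- t₀ ∈ S
  have himg : t₀ ∈ Finset.univ.image x := by
    by_contra hc
    apply ht₀
    apply Finset.sum_eq_zero
    intro i hi
    exact absurd (Finset.mem_image.mpr ⟨i, Finset.mem_univ i, (Finset.mem_filter.mp hi).2⟩) hc
  have ht₀S : t₀ ∈ S := Finset.mem_filter.mpr ⟨himg, ht₀⟩
  -- key: polynomial sums over S vanish
  have key : ∀ p : ℝ[X], p.natDegree < g → ∑ t ∈ S, p.eval t * H t = 0 := by
    intro p hp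
    have h1 : ∑ t ∈ Finset.univ.image x, p.eval t * H t = ∑ i, p.eval (x i) * h i := by
      rw [← Finset.sum_fiberwise_of_maps_to (fun i _ => Finset.mem_image_of_mem x (Finset.mem_univ i))
        (fun i => p.eval (x i) * h i)]
      refine Finset.sum_congr rfl fun t _ => ?_
      rw [hH]
      rw [Finset.mul_sum]
      refine Finset.sum_congr rfl fun i hi => ?_
      rw [(Finset.mem_filter.mp hi).2]
    have h2 : ∑ t ∈ S, p.eval t * H t = ∑ t ∈ Finset.univ.image x, p.eval t * H t := by
      rw [hSdef]
      refine (Finset.sum_filter_of_ne (s := Finset.univ.image x) (f := fun t => p.eval t * H t) (p := fun t => H t ≠ 0) fun t _ hne hz => ?_)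
      exact hne (by simp only [hz, mul_zero])
    rw [h2, h1, poly_sum_zero' hsys p hp]
  set Pos : Finset ℝ := S.filter (fun t => 0 < H t) with hPosdef
  set Neg : Finset ℝ := S.filter (fun t => H t < 0) with hNegdef
  have hsplit : ∀ t ∈ S, t ∈ Pos ∨ t ∈ Neg := by
    intro t ht
    have := (Finset.mem_filter.mp ht).2
    rcases lt_or_gt_of_ne this with h' | h'
    · exact Or.inr (Finset.mem_filter.mpr ⟨ht, h'⟩)
    · exact Or.inl (Finset.mem_filter.mpr ⟨ht, h'⟩)
  have hsum0 : ∑ t ∈ S, H t = 0 := by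
    have := key 1 (by simpa using Nat.lt_of_lt_of_le Nat.zero_lt_one hg)
    simpa using this
  -- Pos nonempty
  have hPosne : Pos.Nonempty := by
    by_contra hc
    rw [Finset.not_nonempty_iff_eq_empty] at hc
    have hneg : ∑ t ∈ S, H t < 0 := by
      refine Finset.sum_neg (fun t ht => ?_) ⟨t₀, ht₀S⟩
      rcases hsplit t ht with h' | h'
      · exact absurd h' (by rw [hc]; exact Finset.notMem_empty t)
      · exact (Finset.mem_filter.mp h').2
    rw [hsum0] at hneg; exact lt_irrefl 0 hneg
  -- card bound on Neg via polynomial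
  have hNegcard : (g + 1) / 2 ≤ Neg.card := by
    by_contra hc
    push_neg at hc
    have hdeg : 2 * Neg.card < g := by omega
    set p : ℝ[X] := ∏ u ∈ Neg, (X - C u) ^ 2 with hpdef
    have hmon : ∀ u ∈ Neg, ((X - C u) ^ 2 : ℝ[X]).Monic :=
      fun u _ => (monic_X_sub_C u).pow 2
    have hpdeg : p.natDegree < g := by
      rw [hpdef, Polynomial.natDegree_prod_of_monic _ _ hmon]
      have : ∀ u ∈ Neg, ((X - C u) ^ 2 : ℝ[X]).natDegree = 2 := by
        intro u _
        rw [Polynomial.natDegree_pow, Polynomial.natDegree_X_sub_C]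
      rw [Finset.sum_congr rfl this, Finset.sum_const, smul_eq_mul]
      omega
    have h0 := key p hpdeg
    have hpos : 0 < ∑ t ∈ S, p.eval t * H t := by
      refine Finset.sum_pos' (fun t ht => ?_) ?_
      · rcases hsplit t ht with h' | h'
        · have hev : 0 < p.eval t := by
            rw [hpdef, Polynomial.eval_prod]
            refine Finset.prod_pos fun u hu => ?_
            simp only [Polynomial.eval_pow, Polynomial.eval_sub, Polynomial.eval_X,
              Polynomial.eval_C]
            refine pow_two_pos_of_ne_zero (sub_ne_zero.mpr ?_)
            intro hteq
            have h1 := (Finset.mem_filter.mp h').2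
            have h2 := (Finset.mem_filter.mp hu).2
            rw [hteq] at h1
            exact absurd h1 (not_lt.mpr h2.le)
          exact le_of_lt (mul_pos hev (Finset.mem_filter.mp h').2)
        · have hev : p.eval t = 0 := by
            rw [hpdef, Polynomial.eval_prod]
            refine Finset.prod_eq_zero h' ?_
            simp
          rw [hev, zero_mul]
      · obtain ⟨t, ht⟩ := hPosne
        refine ⟨t, (Finset.mem_filter.mp ht).1, ?_⟩
        have hev : 0 < p.eval t := by
          rw [hpdef, Polynomial.eval_prod]
          refine Finset.prod_pos fun u hu => ?_
          simp only [Polynomial.eval_pow, Polynomial.eval_sub, Polynomial.eval_X,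
            Polynomial.eval_C]
          refine pow_two_pos_of_ne_zero (sub_ne_zero.mpr ?_)
          intro hteq
          have h1 := (Finset.mem_filter.mp ht).2
          have h2 := (Finset.mem_filter.mp hu).2
          rw [hteq] at h1
          exact absurd h1 (not_lt.mpr h2.le)
        exact mul_pos hev (Finset.mem_filter.mp ht).2
    rw [h0] at hpos; exact lt_irrefl 0 hpos
  -- transfer to indices
  have hsub : Neg ⊆ (Finset.univ.filter (fun i => h i < 0)).image x := by
    intro t ht
    have hHt : H t < 0 := (Finset.mem_filter.mp ht).2
    have : ∃ i ∈ Finset.univ.filter (fun i => x i = t), h i < 0 := by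
      by_contra hc
      push_neg at hc
      have : 0 ≤ H t := Finset.sum_nonneg fun i hi => hc i hi
      exact absurd hHt (not_lt.mpr this)
    obtain ⟨i, hi, hhi⟩ := this
    exact Finset.mem_image.mpr ⟨i, Finset.mem_filter.mpr ⟨Finset.mem_univ i, hhi⟩,
      (Finset.mem_filter.mp hi).2⟩
  exact le_trans hNegcard (le_trans (Finset.card_le_card hsub) Finset.card_image_le)

/-- Corollary: a nowhere-zero solution of the dual Vandermonde system (with possibly
repeated nodes `x i`) either has all its "fiber sums" `∑_{x i = t} h i` equal to zero,
or has at least `⌊(g+1)/2⌋` positive and at least `⌊(g+1)/2⌋` negative entries. -/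
theorem fiber_sums_zero_or_many_signs (g n : ℕ) (hg : 1 ≤ g)
    (x : Fin n → ℝ) (h : Fin n → ℝ)
    (hsys : ∀ k, k < g → ∑ i, x i ^ k * h i = 0)
    (hnz : ∀ i, h i ≠ 0) :
    (∀ t : ℝ, ∑ i ∈ Finset.univ.filter (fun i => x i = t), h i = 0) ∨
    ((g + 1) / 2 ≤ (Finset.univ.filter (fun i => 0 < h i)).card ∧
     (g + 1) / 2 ≤ (Finset.univ.filter (fun i => h i < 0)).card) := by
  by_cases hall : ∀ t : ℝ, ∑ i ∈ Finset.univ.filter (fun i => x i = t), h i = 0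
  · exact Or.inl hall
  right
  push_neg at hall
  obtain ⟨t₀, ht₀⟩ := hall
  refine ⟨?_, neg_count' hg x h hsys t₀ ht₀⟩
  have hsys' : ∀ k, k < g → ∑ i, x i ^ k * (-h) i = 0 := by
    intro k hk
    simp only [Pi.neg_apply, mul_neg, Finset.sum_neg_distrib]
    rw [hsys k hk, neg_zero]
  have ht₀' : ∑ i ∈ Finset.univ.filter (fun i => x i = t₀), (-h) i ≠ 0 := by
    simp only [Pi.neg_apply, Finset.sum_neg_distrib]
    exact neg_ne_zero.mpr ht₀
  have := neg_count' hg x (-h) hsys' t₀ ht₀'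
  have heq : Finset.univ.filter (fun i => (-h) i < 0) =
      Finset.univ.filter (fun i : Fin n => 0 < h i) := by
    refine Finset.filter_congr fun i _ => ?_
    simp [neg_lt_zero]
  rwa [heq] at this
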